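/- Let D be a free semi-theory with completion functor Φ_D : D → D̄. Let T, T' ∈ D̄_n (elements of some Hom_{D̄}([n],[r]), Hom_{D̄}([n],[r'])) and let φ = α_k ∘ … ∘ α_1 and φ' = α'_{k'} ∘ … ∘ α'_1 be morphisms of D (decompositions into free generators) with k ≤ k' and with α_1 and α'_1 not projections. If Φ_D(φ) ∘ T = Φ_D(φ') ∘ T', then φ' = φ ∘ θ and T = Φ_D(θ) ∘ T', where θ = α'_{k'-k} ∘ … ∘ α'_1. -/

import Mathlib

open CategoryTheory Limits Topology Topology.Homotopy

noncomputable section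

namespace SemiThPaper

/-! ### Weak homotopy equivalences -/

/-- The map induced by a continuous map on homotopy "groups" (sets for `N = Fin 0`). -/
def HomotopyGroup.map {X Y : Type} [TopologicalSpace X] [TopologicalSpace Y]
    (f : C(X, Y)) (N : Type) (x : X) :
    HomotopyGroup N X x → HomotopyGroup N Y (f x) :=
  Quotient.map
    (fun g => ⟨f.comp g.1, fun y hy => by
      simp only [ContinuousMap.comp_apply]
      rw [g.2 y hy]⟩)
    (fun g h H => H.elim fun H => ⟨H.compContinuousMap f⟩)

/-- The map induced on path components. -/
def ZerothHomotopy.map {X Y : Type} [TopologicalSpace X] [TopologicalSpace Y]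
    (f : C(X, Y)) : ZerothHomotopy X → ZerothHomotopy Y :=
  Quotient.map f (fun _ _ h => h.elim fun γ => ⟨γ.map f.continuous⟩)

/-- A weak homotopy equivalence of topological spaces: a continuous map inducing a
bijection on path components and on all homotopy groups at all basepoints. -/
def IsWeakHomotopyEquiv {X Y : TopCat} (f : X ⟶ Y) : Prop :=
  Function.Bijective (ZerothHomotopy.map (f.hom : C(X, Y))) ∧
    ∀ (n : ℕ) (x : X), Function.Bijective (HomotopyGroup.map (f.hom : C(X, Y)) (Fin n) x)

/-- A weak equivalence of simplicial sets: a map whose geometric realization is a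
weak homotopy equivalence. -/
def WeakEquiv {A B : SSet} (f : A ⟶ B) : Prop :=
  IsWeakHomotopyEquiv (SSet.toTop.map f)


/-! ### Semi-theories -/

/-- The objects `[1], [2], [3], …` of a semi-theory, indexed by positive integers. -/
@[ext]
structure Ob : Type where
  val : ℕ+

instance : Coe ℕ+ Ob := ⟨Ob.mk⟩

/-- An (unpointed) semi-theory: a category with objects `[1], [2], …`
together with distinguished projection morphisms `p^n_k : [n] ⟶ [1]`, where `p^1_1 = 𝟙 [1]`. -/
structure SemiTheory : Type 1 where
  cat : Category.{0, 0} Ob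
  proj : ∀ n : ℕ+, Fin n → @Quiver.Hom Ob cat.toCategoryStruct.toQuiver ⟨n⟩ ⟨1⟩
  proj_one : proj 1 ⟨0, Nat.one_pos⟩ = cat.toCategoryStruct.id ⟨1⟩

/-- The category of diagrams of simplicial sets over (the underlying category of)
a semi-theory. -/
abbrev SemiTheory.Diag (S : SemiTheory) : Type 1 :=
  @CategoryTheory.Functor Ob S.cat SSet _

/-- The `n`-fold levelwise power of a simplicial set. -/
@[simps]
def finPow (n : ℕ+) (A : SSet) : SSet where
  obj m := Fin n → A.obj m
  map θ := TypeCat.ofHom fun a k => A.map θ (a k)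

/-- The canonical comparison map `X[n] ⟶ X[1]^n` of a diagram over a semi-theory,
whose components are induced by the projections. -/
def SemiTheory.projFan (S : SemiTheory) (X : S.Diag) (n : ℕ+) :
    (letI := S.cat; (X.obj ⟨n⟩ ⟶ finPow n (X.obj ⟨1⟩))) :=
  letI := S.cat
  { app := fun m => TypeCat.ofHom fun a k => (X.map (S.proj n k)).app m a
    naturality := fun m m' θ => by
      ext a : 3
      funext k
      exact NatTrans.naturality_apply (X.map (S.proj n k)) θ a }

/-- A strict algebra over a semi-theory: the comparison maps `X[n] ⟶ X[1]^n` are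
isomorphisms for all `n > 1`. -/
def SemiTheory.IsStrictAlgebra (S : SemiTheory) (X : S.Diag) : Prop :=
  ∀ n : ℕ+, 1 < (n : ℕ) → IsIso (S.projFan X n)

/-- A homotopy algebra over a semi-theory: the comparison maps `X[n] ⟶ X[1]^n` are
weak equivalences of simplicial sets for all `n > 1`. -/
def SemiTheory.IsHomotopyAlgebra (S : SemiTheory) (X : S.Diag) : Prop :=
  ∀ n : ℕ+, 1 < (n : ℕ) → WeakEquiv (S.projFan X n)

/-- A semi-theory is an algebraic theory if composition with the projections induces
bijections `Hom([m],[n]) ≅ Hom([m],[1])^n` for all `m` and all `n > 1`. -/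
def SemiTheory.IsAlgebraic (S : SemiTheory) : Prop :=
  letI := S.cat
  ∀ (m n : ℕ+), 1 < (n : ℕ) →
    Function.Bijective (fun (f : (⟨m⟩ : Ob) ⟶ ⟨n⟩) (k : Fin n) => f ≫ S.proj n k)

/-- The comparison map `X[n] ⟶ X[1]^n` for a diagram of simplicial sets over any
category equipped with objects `[n]` and projection morphisms. -/
def projFanAt {C : Type} [Category.{0} C] (o : ℕ+ → C) (p : ∀ n : ℕ+, Fin n → (o n ⟶ o 1))
    (X : C ⥤ SSet) (n : ℕ+) : X.obj (o n) ⟶ finPow n (X.obj (o 1)) where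
  app m := TypeCat.ofHom fun a k => (X.map (p n k)).app m a
  naturality m m' θ := by
    ext a : 3
    funext k
    exact NatTrans.naturality_apply (X.map (p n k)) θ a

/-- Strictness of a diagram with respect to given objects and projections. -/
def IsStrictAt {C : Type} [Category.{0} C] (o : ℕ+ → C)
    (p : ∀ n : ℕ+, Fin n → (o n ⟶ o 1)) (X : C ⥤ SSet) : Prop :=
  ∀ n : ℕ+, 1 < (n : ℕ) → IsIso (projFanAt o p X n)

/-- The homotopy-algebra condition for a diagram with respect to given objects
and projections. -/
def IsHomotopyAt {C : Type} [Category.{0} C] (o : ℕ+ → C)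
    (p : ∀ n : ℕ+, Fin n → (o n ⟶ o 1)) (X : C ⥤ SSet) : Prop :=
  ∀ n : ℕ+, 1 < (n : ℕ) → WeakEquiv (projFanAt o p X n)

/-! ### Free semi-theories -/

/-- Generating data for a free semi-theory: a family of free generators that are
not projections (the projections are added separately as free generators). -/
structure GenData : Type 1 where
  gen : ℕ+ → ℕ+ → Type

/-- The generating quiver of the free semi-theory on `G`: the generators of `G`
together with projection arrows `p^n_k : [n] → [1]` for `n > 1`
(the projection `p^1_1` is the identity, i.e. the empty path). -/
inductive Arr (G : GenData) : ℕ+ → ℕ+ → Type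
  | gen {a b : ℕ+} : G.gen a b → Arr G a b
  | proj {n : ℕ+} (h : 1 < (n : ℕ)) (k : Fin n) : Arr G n 1

/-- The object type of the free semi-theory on `G` (a copy of `Ob`). -/
def FreeOb (G : GenData) : Type := Ob

instance freeQuiver (G : GenData) : Quiver (FreeOb G) :=
  ⟨fun a b => Arr G (Ob.val a) (Ob.val b)⟩

/-- The free semi-theory on `G`, as a category: the paths category on the
generating quiver. -/
abbrev FreeST (G : GenData) := CategoryTheory.Paths (FreeOb G)

/-- The object `[n]` of the free semi-theory. -/
def FreeST.of (G : GenData) (n : ℕ+) : FreeST G := (⟨n⟩ : Ob)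

/-- The generating projection arrow, as an arrow of the generating quiver. -/
def projArr (G : GenData) {n : ℕ+} (h : 1 < (n : ℕ)) (k : Fin n) :
    @Quiver.Hom (FreeOb G) _ (FreeST.of G n) (FreeST.of G 1) := Arr.proj h k

/-- The projection `p^n_k` in the free semi-theory. -/
def projPath (G : GenData) (n : ℕ+) (k : Fin n) : FreeST.of G n ⟶ FreeST.of G 1 :=
  if h : 1 < (n : ℕ) then (projArr G h k).toPath
  else eqToHom (congrArg (FreeST.of G)
    (PNat.coe_injective (by
      rw [PNat.one_coe]
      exact le_antisymm (not_lt.1 h) n.pos)))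

/-- The free semi-theory on `G`, as a semi-theory. -/
def freeSemiTheory (G : GenData) : SemiTheory where
  cat := inferInstanceAs (Category (FreeST G))
  proj n k := projPath G n k
  proj_one := by
    show projPath G 1 ⟨0, Nat.one_pos⟩ = _
    rw [projPath, dif_neg (by norm_num)]
    rfl

/-- The initial semi-theory `P` has no generators besides the projections. -/
def emptyGen : GenData := ⟨fun _ _ => PEmpty⟩

/-- The underlying category of the initial semi-theory `P`. -/
abbrev PCat := FreeST emptyGen

/-- The initial semi-theory `P`: its only non-identity morphisms are the projections. -/
def PTheory : SemiTheory := freeSemiTheory emptyGen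

/-- The action of the unique morphism of semi-theories `P ⟶ C` on generating arrows. -/
def jArr (G : GenData) : ∀ {a b : ℕ+}, Arr emptyGen a b →
    @Quiver.Path (FreeOb G) _ ((⟨a⟩ : Ob) : FreeST G) ((⟨b⟩ : Ob) : FreeST G)
  | _, _, .gen α => α.elim
  | _, _, .proj h k => (projArr G h k).toPath

/-- The unique morphism of semi-theories `P ⟶ C` into a free semi-theory. -/
def Jfree (G : GenData) : PCat ⥤ FreeST G :=
  Paths.lift
    { obj := fun n => (n : FreeST G)
      map := fun {a b} e => jArr G e }

/-! ### The completion of a free semi-theory -/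

/-- Trees representing the morphisms `[n] ⟶ [1]` of the completion `C̄` of a free
semi-theory: either a single edge labelled by a projection `p^n_k`, or a tree whose
lowest edge is labelled by a component `α_i` of a non-projection generator
`α : [m] ⟶ [r]` and which is obtained by grafting `m` smaller trees. -/
inductive CTree (G : GenData) (n : ℕ+) : Type
  | proj (k : Fin n) : CTree G n
  | node {m r : ℕ+} (α : G.gen m r) (i : Fin r) (ts : Fin m → CTree G n) : CTree G n

/-- Morphisms `[n] ⟶ [m]` in the completion: `m`-tuples of trees. -/
def CompHom (G : GenData) (n m : ℕ+) : Type := Fin m → CTree G n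

/-- Grafting: substituting the trees `T k` for the initial edges labelled `p^m_k`. -/
def CTree.graft {G : GenData} {n m : ℕ+} : CTree G m → CompHom G n m → CTree G n
  | .proj k, T => T k
  | .node α i ts, T => .node α i (fun j => (ts j).graft T)

/-- The identity of the completion. -/
def compId (G : GenData) (n : ℕ+) : CompHom G n n := fun k => .proj k

/-- Composition in the completion, by grafting. -/
def compComp {G : GenData} {a b c : ℕ+} (T : CompHom G a b) (S : CompHom G b c) :
    CompHom G a c :=
  fun j => (S j).graft T

theorem CTree.graft_id {G : GenData} {m : ℕ+} (t : CTree G m) :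
    t.graft (compId G m) = t := by
  induction t with
  | proj k => rfl
  | node α i ts ih =>
      simp only [CTree.graft]
      congr 1
      funext j
      exact ih j

theorem CTree.graft_graft {G : GenData} {a b c : ℕ+} (s : CTree G c)
    (U : CompHom G b c) (T : CompHom G a b) :
    (s.graft U).graft T = s.graft (compComp T U) := by
  induction s with
  | proj k => rfl
  | node α i ts ih =>
      simp only [CTree.graft]
      congr 1
      funext j
      exact ih j

/-- The object type of the completion (a copy of `Ob`). -/
def CompOb (G : GenData) : Type := Ob

/-- The completion `C̄` of a free semi-theory, as a category. -/
instance compCategory (G : GenData) : Category (CompOb G) where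
  Hom n m := CompHom G (Ob.val n) (Ob.val m)
  id n := compId G _
  comp f g := compComp f g
  id_comp f := funext fun j => CTree.graft_id _
  comp_id f := rfl
  assoc f g h := funext fun j => (CTree.graft_graft _ _ _).symm

/-- The object `[n]` of the completion. -/
def CompOb.of (G : GenData) (n : ℕ+) : CompOb G := (⟨n⟩ : Ob)

/-- The projection `p̂^n_k` of the completion: a single edge labelled `p^n_k`. -/
def compProj (G : GenData) (n : ℕ+) (k : Fin n) : CompOb.of G n ⟶ CompOb.of G 1 :=
  fun _ => .proj k

/-- The completion, as a semi-theory. -/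
def compSemiTheory (G : GenData) : SemiTheory where
  cat := inferInstanceAs (Category (CompOb G))
  proj n k := compProj G n k
  proj_one := by
    funext i
    have h0 : i = ⟨0, Nat.one_pos⟩ := Fin.ext (Nat.lt_one_iff.mp i.isLt)
    rw [h0]
    rfl

/-- The completion functor `Φ` on generating arrows. -/
def phiArr (G : GenData) : ∀ {a b : ℕ+}, Arr G a b → CompHom G a b
  | _, _, .gen α => fun i => .node α i (fun k => .proj k)
  | _, _, .proj _ k => fun _ => .proj k

/-- The completion functor `Φ_C : C ⟶ C̄` of a free semi-theory. -/
def phi (G : GenData) : FreeST G ⥤ CompOb G :=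
  Paths.lift
    { obj := fun n => (n : CompOb G)
      map := fun {a b} e => phiArr G e }

/-! ### Discrete simplicial sets, products, mapping complexes -/

/-- The discrete simplicial set on a type. -/
@[simps]
def disc (A : Type) : SSet where
  obj _ := A
  map _ := TypeCat.ofHom id

/-- The map of discrete simplicial sets induced by a function. -/
@[simps]
def disc.map {A B : Type} (f : A → B) : disc A ⟶ disc B where
  app _ := TypeCat.ofHom f

/-- The diagram of (discrete) simplicial sets corepresented by the object `[n]`
of a semi-theory. -/
def SemiTheory.corep (S : SemiTheory) (n : ℕ+) : S.Diag :=
  letI := S.cat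
  { obj := fun m => disc ((⟨n⟩ : Ob) ⟶ m)
    map := fun f => disc.map (fun g => g ≫ f)
    map_id := fun m => by
      apply NatTrans.ext
      funext x; ext g : 3
      show g ≫ 𝟙 m = g
      exact Category.comp_id g
    map_comp := fun f f' => by
      apply NatTrans.ext
      funext x; ext g : 3
      show g ≫ (_ ≫ _) = _
      exact (Category.assoc _ _ _).symm }

/-- Levelwise product of two simplicial sets. -/
@[simps]
def mulC (A K : SSet) : SSet where
  obj m := A.obj m × K.obj m
  map θ := TypeCat.ofHom fun p => (A.map θ p.1, K.map θ p.2)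
  map_id m := by ext p : 3; simp
  map_comp f g := by ext p : 3; simp

/-- `f × id` on levelwise products. -/
@[simps]
def mulC.mapLeft {A B : SSet} (f : A ⟶ B) (K : SSet) : mulC A K ⟶ mulC B K where
  app m := TypeCat.ofHom fun p => (f.app m p.1, p.2)
  naturality m m' θ := by
    ext p : 3
    simp only [mulC_obj, mulC_map, types_comp_apply]
    exact Prod.ext (by exact NatTrans.naturality_apply f θ p.1) rfl

/-- `id × g` on levelwise products. -/
@[simps]
def mulC.mapRight (A : SSet) {K L : SSet} (g : K ⟶ L) : mulC A K ⟶ mulC A L where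
  app m := TypeCat.ofHom fun p => (p.1, g.app m p.2)
  naturality m m' θ := by
    ext p : 3
    simp only [mulC_obj, mulC_map, types_comp_apply]
    exact Prod.ext rfl (by exact NatTrans.naturality_apply g θ p.2)

theorem mulC.mapRight_id (A K : SSet) : mulC.mapRight A (𝟙 K) = 𝟙 (mulC A K) := by
  apply NatTrans.ext; funext x; ext p : 3; rfl

theorem mulC.mapRight_comp (A : SSet) {K L M : SSet} (g : K ⟶ L) (h : L ⟶ M) :
    mulC.mapRight A (g ≫ h) = mulC.mapRight A g ≫ mulC.mapRight A h := by
  apply NatTrans.ext; funext x; ext p : 3; rfl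

/-- Naturality, in applied form. -/
theorem natApply {C : Type} [Category C] {X Y : C ⥤ SSet} (f : X ⟶ Y)
    {c c' : C} (φ : c ⟶ c') (x : SimplexCategoryᵒᵖ) (a : (X.obj c).obj x) :
    (f.app c').app x ((X.map φ).app x a) = (Y.map φ).app x ((f.app c).app x a) :=
  ConcreteCategory.congr_hom (NatTrans.congr_app (f.naturality φ) x) a

/-- The objectwise product of a diagram of simplicial sets with a constant
simplicial set. -/
@[simps]
def prodConst {C : Type} [Category C] (X : C ⥤ SSet) (K : SSet) : C ⥤ SSet where
  obj c := mulC (X.obj c) K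
  map f := mulC.mapLeft (X.map f) K
  map_id c := by
    apply NatTrans.ext; funext x; ext p : 3
    show ((X.map (𝟙 c)).app x p.1, p.2) = p
    rw [X.map_id]
    rfl
  map_comp f g := by
    apply NatTrans.ext; funext x; ext p : 3
    show ((X.map (f ≫ g)).app x p.1, p.2) = _
    rw [X.map_comp]
    rfl

/-- Functoriality of `prodConst` in the diagram variable. -/
@[simps]
def prodConst.mapX {C : Type} [Category C] {X X' : C ⥤ SSet} (f : X ⟶ X') (K : SSet) :
    prodConst X K ⟶ prodConst X' K where
  app c := mulC.mapLeft (f.app c) K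
  naturality c c' φ := by
    apply NatTrans.ext; funext x; ext p : 3
    simp only [prodConst_obj, prodConst_map, NatTrans.comp_app, mulC.mapLeft_app,
      types_comp_apply]
    exact Prod.ext (natApply f φ x p.1) rfl

/-- Functoriality of `prodConst` in the constant variable. -/
@[simps]
def prodConst.mapK {C : Type} [Category C] (X : C ⥤ SSet) {K L : SSet} (g : K ⟶ L) :
    prodConst X K ⟶ prodConst X L where
  app c := mulC.mapRight (X.obj c) g
  naturality c c' φ := by
    apply NatTrans.ext; funext x; ext p : 3
    rfl

theorem prodConst.mapK_id {C : Type} [Category C] (X : C ⥤ SSet) (K : SSet) :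
    prodConst.mapK X (𝟙 K) = 𝟙 (prodConst X K) := by
  apply NatTrans.ext; funext c
  exact mulC.mapRight_id _ _

theorem prodConst.mapK_comp {C : Type} [Category C] (X : C ⥤ SSet) {K L M : SSet}
    (g : K ⟶ L) (h : L ⟶ M) :
    prodConst.mapK X (g ≫ h) = prodConst.mapK X g ≫ prodConst.mapK X h := by
  apply NatTrans.ext; funext c
  exact mulC.mapRight_comp _ _ _

/-- The standard simplex `Δ[k]`, for `k : SimplexCategoryᵒᵖ`. -/
def stdS (k : SimplexCategoryᵒᵖ) : SSet := SSet.stdSimplex.obj k.unop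

/-- Functoriality of the standard simplex (contravariantly in `SimplexCategoryᵒᵖ`). -/
def stdMap {k l : SimplexCategoryᵒᵖ} (θ : k ⟶ l) : stdS l ⟶ stdS k :=
  SSet.stdSimplex.map θ.unop

theorem stdMap_id (k : SimplexCategoryᵒᵖ) : stdMap (𝟙 k) = 𝟙 (stdS k) :=
  SSet.stdSimplex.map_id _

theorem stdMap_comp {k l m : SimplexCategoryᵒᵖ} (θ : k ⟶ l) (η : l ⟶ m) :
    stdMap (θ ≫ η) = stdMap η ≫ stdMap θ :=
  SSet.stdSimplex.map_comp _ _

/-- The simplicial mapping complex of two diagrams of simplicial sets: its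
`m`-simplices are the natural transformations `X × Δ[m] ⟶ Y`. -/
def MapCx {C : Type} [Category C] (X Y : C ⥤ SSet) : SSet where
  obj m := prodConst X (stdS m) ⟶ Y
  map {m m'} θ := TypeCat.ofHom fun t => prodConst.mapK X (stdMap θ) ≫ t
  map_id m := by
    ext t : 3
    simp [stdMap_id, prodConst.mapK_id]
  map_comp θ η := by
    ext t : 3
    simp [stdMap_comp, prodConst.mapK_comp]

/-- Precomposition on mapping complexes. -/
def MapCx.pre {C : Type} [Category C] {X X' : C ⥤ SSet} (f : X' ⟶ X) (Y : C ⥤ SSet) :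
    MapCx X Y ⟶ MapCx X' Y where
  app m := TypeCat.ofHom fun t => prodConst.mapX f (stdS m) ≫ t
  naturality m m' θ := by
    ext t : 3
    rfl

/-- Postcomposition on mapping complexes. -/
def MapCx.post {C : Type} [Category C] (X : C ⥤ SSet) {Y Y' : C ⥤ SSet} (g : Y ⟶ Y') :
    MapCx X Y ⟶ MapCx X Y' where
  app m := TypeCat.ofHom fun t => t ≫ g
  naturality m m' θ := by
    ext t : 3
    rfl

/-- Restriction of mapping complexes along a functor. -/
def MapCx.whisk {C D : Type} [Category C] [Category D] (F : D ⥤ C) (X Y : C ⥤ SSet) :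
    MapCx X Y ⟶ MapCx (F ⋙ X) (F ⋙ Y) where
  app m := TypeCat.ofHom fun t =>
    (show prodConst (F ⋙ X) (stdS m) ⟶ F ⋙ Y from CategoryTheory.Functor.whiskerLeft F t)
  naturality m m' θ := by
    ext t : 3
    rfl

/-- The simplicial mapping complex of two simplicial sets: its `m`-simplices are
the maps `A × Δ[m] ⟶ B`. -/
def sMap (A B : SSet) : SSet where
  obj m := mulC A (stdS m) ⟶ B
  map {m m'} θ := TypeCat.ofHom fun t => mulC.mapRight A (stdMap θ) ≫ t
  map_id m := by
    ext t : 3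
    simp [stdMap_id, mulC.mapRight_id]
  map_comp θ η := by
    ext t : 3
    simp [stdMap_comp, mulC.mapRight_comp]

/-- Precomposition on simplicial mapping complexes. -/
def sMap.pre {A A' : SSet} (f : A' ⟶ A) (B : SSet) : sMap A B ⟶ sMap A' B where
  app m := TypeCat.ofHom fun t => mulC.mapLeft f (stdS m) ≫ t
  naturality m m' θ := by
    ext t : 3
    rfl

/-- Postcomposition on simplicial mapping complexes. -/
def sMap.post (A : SSet) {B B' : SSet} (g : B ⟶ B') : sMap A B ⟶ sMap A B' where
  app m := TypeCat.ofHom fun t => t ≫ g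
  naturality m m' θ := by
    ext t : 3
    rfl

/-! ### Decompositions of morphisms of a free semi-theory -/

/-- Whether a generating arrow is a generator of `G` (as opposed to a projection). -/
def Arr.isGen {G : GenData} : ∀ {a b : ℕ+}, Arr G a b → Prop
  | _, _, .gen _ => True
  | _, _, .proj _ _ => False

/-- A morphism `φ = α_k ∘ ⋯ ∘ α_1` of a free semi-theory (a path in the generating
quiver) starts with a non-projection: `α_1` is not a projection. -/
def startsNonProj {G : GenData} : ∀ {a b : FreeOb G}, Quiver.Path a b → Prop
  | _, _, .nil => False
  | _, _, .cons .nil e => Arr.isGen e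
  | _, _, .cons (.cons p e') _ => startsNonProj (Quiver.Path.cons p e')

/-- The first `j` arrows of a path (together with their target). -/
def pathTake {V : Type} [Quiver.{0} V] {a : V} : ∀ {b : V}, Quiver.Path a b → ℕ → Σ c : V, Quiver.Path a c
  | _, .nil, _ => ⟨a, .nil⟩
  | b, .cons p e, j => if j ≤ p.length then pathTake p j else ⟨b, .cons p e⟩

/-! ### The diagram `D̄_n` and its filtrations -/

/-- The `D`-diagram `D̄_n` with `D̄_n[m] = Hom_{D̄}([n],[m])`, where the `D`-action
is given by composition via the completion functor `Φ`. -/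
def barDn (G : GenData) (n : ℕ+) : FreeST G ⥤ SSet where
  obj m := disc (CompOb.of G n ⟶ (phi G).obj m)
  map {a b} ψ := disc.map (fun T => T ≫ (phi G).map ψ)
  map_id a := by
    apply NatTrans.ext
    funext x; ext T : 3
    show T ≫ (phi G).map (𝟙 a) = T
    rw [CategoryTheory.Functor.map_id]
    exact Category.comp_id _
  map_comp {a b c} ψ ψ' := by
    apply NatTrans.ext
    funext x; ext T : 3
    show T ≫ (phi G).map (ψ ≫ ψ') = (T ≫ (phi G).map ψ) ≫ (phi G).map ψ'
    rw [CategoryTheory.Functor.map_comp]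
    exact (Category.assoc _ _ _).symm

/-- The filtration of `D̄_n` by sub-`D`-diagrams:
`D̄_n^0 = D_n` (the image of the corepresented diagram) and `D̄_n^{k+1}` is the
smallest sub-`D`-diagram containing all tuples of elements of `D̄_n^k[1]`. -/
def Filt (G : GenData) (n : ℕ+) : ℕ → ∀ m : ℕ+, Set (CompHom G n m)
  | 0, m => {T | ∃ ψ : FreeST.of G n ⟶ FreeST.of G m, T = (phi G).map ψ}
  | k+1, m => {T | ∃ (m' : ℕ+) (S : CompHom G n m')
      (ψ : FreeST.of G m' ⟶ FreeST.of G m),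
      (∀ j : Fin m', (fun _ : Fin 1 => S j) ∈ Filt G n k 1) ∧
        T = (S : CompOb.of G n ⟶ CompOb.of G m') ≫ (phi G).map ψ}

/-- The filtration of `D̄_n` by sub-`P`-diagrams: `sD̄_n^0 = D_n` and `sD̄_n^{k+1}` is
the smallest sub-`P`-diagram containing all tuples of elements of `D̄ₙ^k[1]`. -/
def sFilt (G : GenData) (n : ℕ+) : ℕ → ∀ m : ℕ+, Set (CompHom G n m)
  | 0, m => Filt G n 0 m
  | k+1, m => {T | ∀ j : Fin m, (fun _ : Fin 1 => T j) ∈ Filt G n k 1}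

theorem Filt.closed (G : GenData) (n : ℕ+) (k : ℕ) {a b : ℕ+}
    {T : CompOb.of G n ⟶ CompOb.of G a} (hT : T ∈ Filt G n k a)
    (ψ : FreeST.of G a ⟶ FreeST.of G b) : T ≫ (phi G).map ψ ∈ Filt G n k b := by
  cases k with
  | zero =>
      obtain ⟨ψ₀, rfl⟩ := hT
      exact ⟨ψ₀ ≫ ψ, by rw [CategoryTheory.Functor.map_comp]; rfl⟩
  | succ k =>
      obtain ⟨m', S, ψ₁, hS, rfl⟩ := hT
      exact ⟨m', S, ψ₁ ≫ ψ, hS, by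
          rw [CategoryTheory.Functor.map_comp]
          exact Category.assoc _ _ _⟩

theorem phi_map_toPath (G : GenData) {a b : FreeOb G}
    (e : @Quiver.Hom (FreeOb G) _ a b) :
    (phi G).map e.toPath = phiArr G e :=
  Paths.lift_toPath _ _

theorem Filt.comp_proj (G : GenData) (n : ℕ+) (k : ℕ) {m : ℕ+} {T : CompHom G n m}
    (hT : T ∈ Filt G n k m) (j : Fin m) : (fun _ : Fin 1 => T j) ∈ Filt G n k 1 := by
  by_cases h : 1 < (m : ℕ)
  · have hc := Filt.closed G n k hT (projPath G m j)
    have he : (T : CompOb.of G n ⟶ CompOb.of G m) ≫ (phi G).map (projPath G m j)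
        = (fun _ : Fin 1 => T j) := by
      unfold projPath
      rw [dif_pos h]
      rw [phi_map_toPath G (projArr G h j)]
      rfl
    exact he ▸ hc
  · have hm : m = 1 := PNat.coe_injective (by
      rw [PNat.one_coe]
      exact le_antisymm (not_lt.1 h) m.pos)
    subst hm
    have ht : (fun _ : Fin 1 => T j) = T := by
      funext i
      congr 1
      exact Fin.ext (by
        rw [Nat.lt_one_iff.mp i.isLt, Nat.lt_one_iff.mp j.isLt])
    rwa [ht]

theorem sFilt.closed_arr (G : GenData) (n : ℕ+) (k : ℕ) {c b : ℕ+}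
    {T : CompHom G n c} (hT : T ∈ sFilt G n k c) (e : Arr emptyGen c b) :
    (T : CompOb.of G n ⟶ CompOb.of G c) ≫ (phi G).map (jArr G e) ∈ sFilt G n k b := by
  cases e with
  | gen α => exact α.elim
  | proj h j =>
      have h1 : (phi G).map (jArr G (Arr.proj h j)) = phiArr G (Arr.proj h j) := by
        show (phi G).map (projArr G h j).toPath = _
        exact phi_map_toPath G _
      rw [h1]
      show (fun _ : Fin 1 => T j) ∈ sFilt G n k 1
      cases k with
      | zero => exact Filt.comp_proj G n 0 hT j
      | succ k' => intro i; exact hT j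

theorem sFilt.closed (G : GenData) (n : ℕ+) (k : ℕ) {a b : PCat}
    {T : CompOb.of G n ⟶ CompOb.of G (Ob.val a)} (hT : T ∈ sFilt G n k (Ob.val a))
    (ψ : a ⟶ b) :
    T ≫ (phi G).map ((Jfree G).map ψ) ∈ sFilt G n k (Ob.val b) := by
  change @Quiver.Path (FreeOb emptyGen) _ a b at ψ
  induction ψ with
  | nil => exact hT
  | cons p e ih =>
      have h1 : (phi G).map ((Jfree G).map (Quiver.Path.cons p e))
          = (phi G).map ((Jfree G).map p) ≫ (phi G).map (jArr G e) := by
        show (phi G).map ((Jfree G).map (p ≫ Quiver.Hom.toPath e)) = _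
        refine ((congrArg (phi G).map ((Jfree G).map_comp p (Quiver.Hom.toPath e))).trans
          ((phi G).map_comp _ _)).trans ?_
        congr 1
        exact congrArg (phi G).map
          (show (Jfree G).map (Quiver.Hom.toPath e) = jArr G e from Paths.lift_toPath _ _)
      have h2 : T ≫ (phi G).map ((Jfree G).map (Quiver.Path.cons p e))
          = (T ≫ (phi G).map ((Jfree G).map p)) ≫ (phi G).map (jArr G e) := by
        exact (congrArg (fun f => T ≫ f) h1).trans (Category.assoc _ _ _).symm
      exact h2 ▸ sFilt.closed_arr G n k ih e

/-- The sub-`D`-diagram `D̄_n^k` of `D̄_n`. -/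
def FiltDiag (G : GenData) (n : ℕ+) (k : ℕ) : FreeST G ⥤ SSet where
  obj m := disc (Filt G n k (Ob.val m))
  map {a b} ψ := disc.map (fun T => ⟨T.1 ≫ (phi G).map ψ, Filt.closed G n k T.2 ψ⟩)
  map_id a := by
    apply NatTrans.ext
    funext x; ext T : 3
    apply Subtype.ext
    show T.1 ≫ (phi G).map (𝟙 a) = T.1
    rw [CategoryTheory.Functor.map_id]
    exact Category.comp_id _
  map_comp {a b c} ψ ψ' := by
    apply NatTrans.ext
    funext x; ext T : 3
    apply Subtype.ext
    show T.1 ≫ (phi G).map (ψ ≫ ψ') = (T.1 ≫ (phi G).map ψ) ≫ (phi G).map ψ'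
    rw [CategoryTheory.Functor.map_comp]
    exact (Category.assoc _ _ _).symm

/-- The sub-`P`-diagram `sD̄_n^k` of `D̄_n`. -/
def sFiltDiag (G : GenData) (n : ℕ+) (k : ℕ) : PCat ⥤ SSet where
  obj m := disc (sFilt G n k (Ob.val m))
  map {a b} ψ := disc.map (fun T => ⟨T.1 ≫ (phi G).map ((Jfree G).map ψ),
    sFilt.closed G n k T.2 ψ⟩)
  map_id a := by
    apply NatTrans.ext
    funext x; ext T : 3
    apply Subtype.ext
    show T.1 ≫ (phi G).map ((Jfree G).map (𝟙 a)) = T.1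
    rw [CategoryTheory.Functor.map_id, CategoryTheory.Functor.map_id]
    exact Category.comp_id _
  map_comp {a b c} ψ ψ' := by
    apply NatTrans.ext
    funext x; ext T : 3
    apply Subtype.ext
    show T.1 ≫ (phi G).map ((Jfree G).map (ψ ≫ ψ')) =
      (T.1 ≫ (phi G).map ((Jfree G).map ψ)) ≫ (phi G).map ((Jfree G).map ψ')
    rw [CategoryTheory.Functor.map_comp, CategoryTheory.Functor.map_comp]
    exact (Category.assoc _ _ _).symm


theorem Filt.mono (G : GenData) (n : ℕ+) (k : ℕ) (m : ℕ+) :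
    Filt G n k m ⊆ Filt G n (k+1) m := by
  intro T hT
  exact ⟨m, T, 𝟙 _, fun j => Filt.comp_proj G n k hT j,
    by
      rw [CategoryTheory.Functor.map_id]
      exact (Category.comp_id (X := CompOb.of G n) (Y := CompOb.of G m) T).symm⟩

theorem Filt.subset_sFilt (G : GenData) (n : ℕ+) (k : ℕ) (m : ℕ+) :
    Filt G n k m ⊆ sFilt G n (k+1) m :=
  fun _ hT j => Filt.comp_proj G n k hT j

theorem sFilt.subset_Filt (G : GenData) (n : ℕ+) (k : ℕ) (m : ℕ+) :
    sFilt G n (k+1) m ⊆ Filt G n (k+1) m := by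
  intro T hT
  exact ⟨m, T, 𝟙 _, hT, by
      rw [CategoryTheory.Functor.map_id]
      exact (Category.comp_id (X := CompOb.of G n) (Y := CompOb.of G m) T).symm⟩

/-- Restriction of a `D`-diagram to a `P`-diagram. -/
def resP (G : GenData) (X : FreeST G ⥤ SSet) : PCat ⥤ SSet := Jfree G ⋙ X

/-- The inclusion `D̄_n^k ⟶ D̄_n^{k+1}` of sub-`D`-diagrams. -/
def filtIncl (G : GenData) (n : ℕ+) (k : ℕ) : FiltDiag G n k ⟶ FiltDiag G n (k+1) where
  app m := disc.map (Set.inclusion (Filt.mono G n k (Ob.val m)))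
  naturality a b ψ := by
    apply NatTrans.ext
    funext x; ext T : 3
    apply Subtype.ext
    rfl

/-- The inclusion `D̄_n^k ⟶ sD̄_n^{k+1}` of sub-`P`-diagrams. -/
def filtInclS (G : GenData) (n : ℕ+) (k : ℕ) :
    resP G (FiltDiag G n k) ⟶ sFiltDiag G n (k+1) where
  app m := disc.map (Set.inclusion (Filt.subset_sFilt G n k (Ob.val m)))
  naturality a b ψ := by
    apply NatTrans.ext
    funext x; ext T : 3
    apply Subtype.ext
    rfl

/-- The inclusion `sD̄_n^{k+1} ⟶ D̄_n^{k+1}` of sub-`P`-diagrams. -/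
def sFiltIncl (G : GenData) (n : ℕ+) (k : ℕ) :
    sFiltDiag G n (k+1) ⟶ resP G (FiltDiag G n (k+1)) where
  app m := disc.map (Set.inclusion (sFilt.subset_Filt G n k (Ob.val m)))
  naturality a b ψ := by
    apply NatTrans.ext
    funext x; ext T : 3
    apply Subtype.ext
    rfl


section Statement16Aux

variable {G : GenData}

/-- `Φ` on paths, computed directly by recursion. -/
def phiPath {a b : FreeOb G} (p : Quiver.Path a b) : CompHom G (Ob.val a) (Ob.val b) :=
  @Quiver.Path.rec (FreeOb G) (freeQuiver G) a
    (fun x _ => CompHom G (Ob.val a) (Ob.val x))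
    (compId G (Ob.val a)) (fun {_ _} _ e ih => compComp ih (phiArr G e)) b p

theorem phi_map_eq : ∀ {a b : FreeST G} (ψ : a ⟶ b), (phi G).map ψ = phiPath ψ := by
  intro a b ψ
  change @Quiver.Path (FreeOb G) _ a b at ψ
  induction ψ with
  | nil => exact (phi G).map_id a
  | cons p e ih =>
    show (phi G).map (p ≫ Quiver.Hom.toPath e) = _
    erw [Functor.map_comp, ih, phi_map_toPath]
    rfl

theorem compComp_assoc {n a b c : ℕ+} (A : CompHom G n a) (B : CompHom G a b)
    (C : CompHom G b c) :
    compComp (compComp A B) C = compComp A (compComp B C) :=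
  funext fun j => (CTree.graft_graft (C j) B A).symm

theorem compComp_phiPath_cons {n : ℕ+} {a b c : FreeOb G}
    (T : CompHom G n (Ob.val a)) (q : Quiver.Path a b) (e : b ⟶ c) :
    compComp T (phiPath (q.cons e)) = compComp (compComp T (phiPath q)) (phiArr G e) := by
  rw [show phiPath (q.cons e) = compComp (phiPath q) (phiArr G e) from rfl]
  exact (compComp_assoc T (phiPath q) (phiArr G e)).symm

theorem Arr.gen_of_lt {G : GenData} {a b : ℕ+} (f : Arr G a b) (hb : 1 < (b : ℕ)) :
    ∃ γ : G.gen a b, f = Arr.gen γ := by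
  cases f with
  | gen γ => exact ⟨γ, rfl⟩
  | proj h k => simp at hb

theorem pathTake_cons {V : Type} [Quiver.{0} V] {a b c : V} (p : Quiver.Path a b) (e : b ⟶ c)
    {j : ℕ} (hj : j ≤ p.length) : pathTake (p.cons e) j = pathTake p j := by
  show (if j ≤ p.length then pathTake p j else ⟨c, p.cons e⟩) = pathTake p j
  exact if_pos hj

theorem pathTake_length {V : Type} [Quiver.{0} V] {a b : V} (p : Quiver.Path a b) :
    pathTake p p.length = ⟨b, p⟩ := by
  cases p with
  | nil => rfl
  | cons q f =>
    show (if q.length + 1 ≤ q.length then pathTake q (q.length + 1) else ⟨_, q.cons f⟩) = _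
    rw [if_neg (by omega)]

theorem startsNonProj_nil {G : GenData} {a : FreeOb G} :
    startsNonProj (Quiver.Path.nil : Quiver.Path a a) = False := by
  rw [startsNonProj.eq_def]

theorem startsNonProj_single {G : GenData} {a b : FreeOb G} (e : a ⟶ b) :
    startsNonProj (Quiver.Path.nil.cons e) = Arr.isGen e := by
  rw [startsNonProj.eq_def]

theorem startsNonProj_cons_cons {G : GenData} {a b c d : FreeOb G}
    (p : Quiver.Path a b) (e : b ⟶ c) (f : c ⟶ d) :
    startsNonProj ((p.cons e).cons f) = startsNonProj (p.cons e) := by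
  rw [startsNonProj.eq_def]

theorem isGen_proj {G : GenData} {m : ℕ+} (h : 1 < (m : ℕ)) (k : Fin m) :
    ¬ Arr.isGen (G := G) (Arr.proj h k) := fun x => x

theorem main_cancellation (G : GenData) (n : ℕ+) {r : ℕ+} {b : FreeOb G}
    (φ : @Quiver.Path (FreeOb G) (freeQuiver G) (⟨r⟩ : Ob) b) :
    startsNonProj φ → ∀ (r' : ℕ+) (φ' : @Quiver.Path (FreeOb G) (freeQuiver G) (⟨r'⟩ : Ob) b),
      startsNonProj φ' → φ.length ≤ φ'.length →
      ∀ (T : CompHom G n r) (T' : CompHom G n r'),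
      compComp T (phiPath φ) = compComp T' (phiPath φ') →
      ∃ θ : @Quiver.Path (FreeOb G) (freeQuiver G) (⟨r'⟩ : Ob) (⟨r⟩ : Ob),
        pathTake φ' (φ'.length - φ.length) = ⟨((⟨r⟩ : Ob) : FreeOb G), θ⟩ ∧
        φ' = θ.comp φ ∧ T = compComp T' (phiPath θ) := by
  induction φ with
  | nil =>
    intro hφ
    erw [startsNonProj_nil] at hφ
    exact hφ.elim
  | @cons mid bt p e ih =>
    intro hφ r' φ' hφ' hlen T T' H
    cases φ' with
    | nil =>
      erw [Quiver.Path.length_cons, Quiver.Path.length_nil] at hlen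
      omega
    | @cons mid' bt' p' e' =>
      obtain ⟨bv⟩ := bt
      obtain ⟨mv⟩ := mid
      obtain ⟨mv'⟩ := mid'
      change Arr G mv bv at e
      cases e with
      | gen γ =>
        change Arr G mv' bv at e'
        cases e' with
        | gen γ' =>
          have Hc : CTree.node γ ⟨0, bv.pos⟩ (fun j => compComp T (phiPath p) j)
              = CTree.node γ' ⟨0, bv.pos⟩ (fun j => compComp T' (phiPath p') j) :=
            congrFun H ⟨0, bv.pos⟩
          injection Hc with hm hr hα hi hts
          have hm' : mv = mv' := hm
          subst hm'
          have hγ : γ = γ' := eq_of_heq hα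
          subst hγ
          have hU : compComp T (phiPath p) = compComp T' (phiPath p') := eq_of_heq hts
          cases p with
          | nil =>
            refine ⟨p', ?_, ?_, hU⟩
            · erw [Quiver.Path.length_cons, Quiver.Path.length_cons,
                Quiver.Path.length_nil, Nat.add_sub_add_right, Nat.sub_zero,
                pathTake_cons, pathTake_length]
              exact le_refl _
            · rfl
          | @cons qmid cx q f =>
            have hφp := hφ
            erw [startsNonProj_cons_cons] at hφp
            erw [Quiver.Path.length_cons, Quiver.Path.length_cons,
              Quiver.Path.length_cons] at hlen
            have hp'pos : 0 < p'.length := by omega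
            have hφ'p : startsNonProj p' := by
              cases p' with
              | nil => erw [Quiver.Path.length_nil] at hp'pos; omega
              | @cons qmid' cx' q' f' =>
                erw [startsNonProj_cons_cons] at hφ'
                exact hφ'
            obtain ⟨θ, hTake, hComp, hT⟩ :=
              ih hφp r' p' hφ'p (by erw [Quiver.Path.length_cons]; omega) T T' hU
            refine ⟨θ, ?_, ?_, hT⟩
            · erw [Quiver.Path.length_cons, Quiver.Path.length_cons,
                Quiver.Path.length_cons, Nat.add_sub_add_right, pathTake_cons]
              · erw [Quiver.Path.length_cons] at hTake
                exact hTake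
              · exact Nat.sub_le _ _
            · erw [hComp]
              rfl
        | proj h' k' =>
          cases p' with
          | nil =>
            erw [startsNonProj_single] at hφ'
            exact (isGen_proj h' k' hφ').elim
          | @cons qmid' cx' q' f' =>
            obtain ⟨γ₂, rfl⟩ := Arr.gen_of_lt f' h'
            have Hc : CTree.node γ ⟨0, Nat.one_pos⟩ (fun j => compComp T (phiPath p) j)
                = CTree.node γ₂ k' (fun j => compComp T' (phiPath q') j) :=
              congrFun H ⟨0, Nat.one_pos⟩
            injection Hc with hm hr hα hi hts
            have hr' : (1 : ℕ+) = mv' := hr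
            rw [← hr'] at h'
            simp at h'
      | proj h k =>
        change Arr G mv' 1 at e'
        cases e' with
        | gen γ' =>
          cases p with
          | nil =>
            erw [startsNonProj_single] at hφ
            exact (isGen_proj h k hφ).elim
          | @cons qmid cx q f =>
            obtain ⟨γ₁, rfl⟩ := Arr.gen_of_lt f h
            have Hc : CTree.node γ₁ k (fun j => compComp T (phiPath q) j)
                = CTree.node γ' ⟨0, Nat.one_pos⟩ (fun j => compComp T' (phiPath p') j) :=
              congrFun H ⟨0, Nat.one_pos⟩
            injection Hc with hm hr hα hi hts
            have hr' : mv = 1 := hr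
            rw [hr'] at h
            simp at h
        | proj h' k' =>
          cases p with
          | nil =>
            erw [startsNonProj_single] at hφ
            exact (isGen_proj h k hφ).elim
          | @cons qmid cx q f =>
            cases p' with
            | nil =>
              erw [startsNonProj_single] at hφ'
              exact (isGen_proj h' k' hφ').elim
            | @cons qmid' cx' q' f' =>
              obtain ⟨γ₁, rfl⟩ := Arr.gen_of_lt f h
              obtain ⟨γ₂, rfl⟩ := Arr.gen_of_lt f' h'
              have Hc : CTree.node γ₁ k (fun j => compComp T (phiPath q) j)
                  = CTree.node γ₂ k' (fun j => compComp T' (phiPath q') j) :=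
                congrFun H ⟨0, Nat.one_pos⟩
              injection Hc with hm hr hα hi hts
              have hr' : mv = mv' := hr
              subst hr'
              have hq : qmid = qmid' := Ob.ext hm
              subst hq
              have hγ : γ₁ = γ₂ := eq_of_heq hα
              subst hγ
              have hk : k = k' := eq_of_heq hi
              subst hk
              have hV : compComp T (phiPath q) = compComp T' (phiPath q') := eq_of_heq hts
              have hφp := hφ
              erw [startsNonProj_cons_cons] at hφp
              have hφ'p := hφ'
              erw [startsNonProj_cons_cons] at hφ'p
              erw [Quiver.Path.length_cons, Quiver.Path.length_cons,
                Quiver.Path.length_cons, Quiver.Path.length_cons] at hlen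
              obtain ⟨θ, hTake, hComp, hT⟩ :=
                ih hφp r' _ hφ'p
                  (by erw [Quiver.Path.length_cons, Quiver.Path.length_cons]; omega) T T'
                  (by erw [compComp_phiPath_cons, compComp_phiPath_cons]
                      exact congrArg (fun W => compComp W (phiArr G (Arr.gen γ₁))) hV)
              refine ⟨θ, ?_, ?_, hT⟩
              · erw [Quiver.Path.length_cons, Quiver.Path.length_cons,
                  Quiver.Path.length_cons, Quiver.Path.length_cons,
                  Nat.add_sub_add_right, pathTake_cons]
                · erw [Quiver.Path.length_cons, Quiver.Path.length_cons] at hTake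
                  exact hTake
                · erw [Quiver.Path.length_cons]
                  omega
              · erw [hComp]
                rfl

end Statement16Aux


/-! ### STATEMENT 16
If `Φ(φ) ∘ T = Φ(φ') ∘ T'` with `φ, φ'` not starting with projections and
`length φ ≤ length φ'`, then `φ' = φ ∘ θ` and `T = Φ(θ) ∘ T'`, where `θ` consists
of the first `length φ' - length φ` generators of `φ'`. -/
theorem comp_phi_cancellation (G : GenData) {n r r' s : ℕ+}
    (φ : FreeST.of G r ⟶ FreeST.of G s) (φ' : FreeST.of G r' ⟶ FreeST.of G s)
    (hφ : startsNonProj φ) (hφ' : startsNonProj φ')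
    (hlen : Quiver.Path.length φ ≤ Quiver.Path.length φ')
    (T : CompOb.of G n ⟶ CompOb.of G r) (T' : CompOb.of G n ⟶ CompOb.of G r')
    (h : T ≫ (phi G).map φ = T' ≫ (phi G).map φ') :
    ∃ θ : FreeST.of G r' ⟶ FreeST.of G r,
      pathTake φ' (Quiver.Path.length φ' - Quiver.Path.length φ)
          = ⟨FreeST.of G r, θ⟩ ∧
      φ' = θ ≫ φ ∧ T = T' ≫ (phi G).map θ := by
  erw [phi_map_eq, phi_map_eq] at h
  obtain ⟨θ, h1, h2, h3⟩ := main_cancellation G n φ hφ r' φ' hφ' hlen T T' h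
  exact ⟨θ, h1, h2, by erw [phi_map_eq]; exact h3⟩

end SemiThPaper
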